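/- Let G be a finite group and H, K ≤ G subgroups. Then |X^H| = |X^K| for every finite G-set X if and only if H and K are conjugate in G. -/
import Mathlib


universe u

private def fixedConjEquiv {G : Type u} [Group G] (H : Subgroup G) (g : G)
    (X : Type u) [MulAction G X] :
    {x : X // ∀ a ∈ H, a • x = x} ≃
      {x : X // ∀ a ∈ H.map (MulAut.conj g).toMonoidHom, a • x = x} where
  toFun := fun ⟨x, hx⟩ => ⟨g • x, by
    rintro a ha
    rcases Subgroup.mem_map.mp ha with ⟨b, hb, rfl⟩
    simp only [MulEquiv.coe_toMonoidHom, MulAut.conj_apply]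
    rw [smul_smul]
    have h1 : g * b * g⁻¹ * g = g * b := by group
    rw [h1, ← smul_smul, hx b hb]⟩
  invFun := fun ⟨x, hx⟩ => ⟨g⁻¹ • x, by
    intro a ha
    have h0 : (g * a * g⁻¹) • x = x := hx _ (Subgroup.mem_map.mpr ⟨a, ha, rfl⟩)
    have h1 : a • g⁻¹ • x = g⁻¹ • (g * a * g⁻¹) • x := by
      rw [smul_smul, smul_smul]
      congr 1
      group
    rw [h1, h0]⟩
  left_inv := fun ⟨x, hx⟩ => by simp
  right_inv := fun ⟨x, hx⟩ => by simp

private lemma le_map_conj_of_card_eq {G : Type u} [Group G] [Fintype G]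
    (H K : Subgroup G)
    (h : Nat.card {x : G ⧸ H // ∀ g ∈ H, g • x = x} =
         Nat.card {x : G ⧸ H // ∀ g ∈ K, g • x = x}) :
    ∃ g : G, K ≤ H.map (MulAut.conj g).toMonoidHom := by
  have hne : Nonempty {x : G ⧸ H // ∀ g ∈ H, g • x = x} := by
    refine ⟨⟨((1 : G) : G ⧸ H), fun a ha => ?_⟩⟩
    rw [MulAction.Quotient.smul_mk]
    exact QuotientGroup.eq.mpr (by simpa using ha)
  have hpos : 0 < Nat.card {x : G ⧸ H // ∀ g ∈ K, g • x = x} := by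
    rw [← h]
    exact Nat.card_pos
  obtain ⟨⟨x, hx⟩⟩ := (Nat.card_pos_iff.mp hpos).1
  obtain ⟨g, rfl⟩ := QuotientGroup.mk_surjective x
  refine ⟨g, fun k hk => ?_⟩
  have key : ∀ k' ∈ K, g⁻¹ * k'⁻¹ * g ∈ H := by
    intro k' hk'
    have := hx k' hk'
    rw [MulAction.Quotient.smul_mk] at this
    have := QuotientGroup.eq.mp this
    simpa [mul_assoc, mul_inv_rev] using this
  have hmem : g⁻¹ * k * g ∈ H := by simpa using key k⁻¹ (inv_mem hk)
  refine Subgroup.mem_map.mpr ⟨g⁻¹ * k * g, hmem, ?_⟩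
  simp only [MulEquiv.coe_toMonoidHom, MulAut.conj_apply]
  group

theorem card_fixedPoints_eq_iff_isConj (G : Type u) [Group G] [Fintype G]
    (H K : Subgroup G) :
    (∀ (X : Type u) [Fintype X] [MulAction G X],
        Nat.card {x : X // ∀ g ∈ H, g • x = x} = Nat.card {x : X // ∀ g ∈ K, g • x = x})
      ↔ ∃ g : G, H.map (MulAut.conj g).toMonoidHom = K := by
  constructor
  · intro h
    have : Fintype (G ⧸ H) := Fintype.ofFinite _
    have : Fintype (G ⧸ K) := Fintype.ofFinite _
    obtain ⟨g₁, hg₁⟩ := le_map_conj_of_card_eq H K (h (G ⧸ H))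
    obtain ⟨g₂, hg₂⟩ := le_map_conj_of_card_eq K H (h (G ⧸ K)).symm
    have cardH : Nat.card (H.map (MulAut.conj g₁).toMonoidHom) = Nat.card H :=
      (Nat.card_congr (Subgroup.equivMapOfInjective H _ (MulAut.conj g₁).injective).toEquiv).symm
    have cardK : Nat.card (K.map (MulAut.conj g₂).toMonoidHom) = Nat.card K :=
      (Nat.card_congr (Subgroup.equivMapOfInjective K _ (MulAut.conj g₂).injective).toEquiv).symm
    have h1 : Nat.card K ≤ Nat.card H := le_of_le_of_eq (Subgroup.card_le_of_le hg₁) cardH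
    have h2 : Nat.card H ≤ Nat.card K := le_of_le_of_eq (Subgroup.card_le_of_le hg₂) cardK
    refine ⟨g₁, (Subgroup.eq_of_le_of_card_ge hg₁ ?_).symm⟩
    rw [cardH]
    exact le_antisymm h1 h2 ▸ le_refl _
  · rintro ⟨g, rfl⟩
    intro X _ _
    exact Nat.card_congr (fixedConjEquiv H g X)
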